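/- arXiv:0903.1585 — 5 statements merged into one kernel-verified Lean document; each statement's English description precedes it below -/
import Mathlib

section
/- Call a finite sequence of complex time steps τ_0, …, τ_{n−1} symmetric if there is an involution π ∈ S_n (π² = id, acting on {1,…,n}) such that τ_j = conj(τ_{π(j+1)−1}) for all j ∈ {0,…,n−1}. Let P be a polynomial with real coefficients, A a real d×d matrix, and τ_0,…,τ_{n−1} a symmetric sequence of complex steps. Then the product ∏_{j=0}^{n−1} P(τ_j A) is a real matrix. -/
open Matrix Polynomial

lemma commute_aeval_aeval {R A : Type*} [CommSemiring R] [Semiring A] [Algebra R A]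
    {x y : A} (h : Commute x y) (p q : R[X]) :
    Commute (aeval x p) (aeval y q) := by
  apply Algebra.commute_of_mem_adjoin_of_forall_mem_commute
    (aeval_mem_adjoin_singleton R y)
  intro b hb
  rw [Set.mem_singleton_iff] at hb
  subst hb
  exact (Algebra.commute_of_mem_adjoin_singleton_of_commute
    (aeval_mem_adjoin_singleton R x) h.symm).symm

/-- If the complex step sequence `τ` is symmetric (there is an involution `π`
with `τ j = conj (τ (π j))`), `P` is a real polynomial and `A` a real matrix,
then `∏_j P(τ_j A)` is a real matrix. -/
theorem symmetric_steps_prod_real {d n : ℕ} (P : Polynomial ℝ)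
    (A : Matrix (Fin d) (Fin d) ℝ) (τ : Fin n → ℂ)
    (π : Equiv.Perm (Fin n)) (hπ : ∀ j, π (π j) = j)
    (hsym : ∀ j, τ j = starRingEnd ℂ (τ (π j))) :
    ∀ i j, (((List.finRange n).map
        (fun l => Polynomial.aeval ((τ l) • A.map Complex.ofReal) P)).prod i j).im = 0 := by
  set B := A.map Complex.ofReal with hB
  set f : Fin n → Matrix (Fin d) (Fin d) ℂ := fun l => aeval ((τ l) • B) P with hf
  -- conjugation as an ℝ-algebra equivalence on matrices
  let φ : Matrix (Fin d) (Fin d) ℂ ≃ₐ[ℝ] Matrix (Fin d) (Fin d) ℂ :=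
    (Complex.conjAe).mapMatrix
  have hφB : ∀ z : ℂ, φ (z • B) = (starRingEnd ℂ z) • B := by
    intro z
    ext i j
    simp [φ, hB, AlgEquiv.mapMatrix_apply, Complex.conjAe]
  have hφf : ∀ l, φ (f l) = f (π l) := by
    intro l
    show φ (aeval (τ l • B) P) = aeval (τ (π l) • B) P
    rw [← Polynomial.aeval_algHom_apply φ, hφB]
    have h1 : (starRingEnd ℂ) (τ l) = τ (π l) := by
      have := congrArg (starRingEnd ℂ) (hsym l)
      simpa using this
    rw [h1]
  set L : List (Matrix (Fin d) (Fin d) ℂ) := (List.finRange n).map f with hL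
  have hcf : ∀ a b, Commute (f a) (f b) := by
    intro a b
    apply commute_aeval_aeval
    show Commute (τ a • B) (τ b • B)
    unfold Commute SemiconjBy
    rw [smul_mul_smul_comm, smul_mul_smul_comm, mul_comm (τ a) (τ b)]
  have h0 : List.Perm ((List.finRange n).map π) (List.finRange n) := by
    apply List.perm_of_nodup_nodup_toFinset_eq
    · exact (List.nodup_finRange n).map π.injective
    · exact List.nodup_finRange n
    · ext x
      simp
      exact ⟨π.symm x, π.apply_symm_apply x⟩
  have hperm : List.Perm ((List.finRange n).map (f ∘ π)) L := by
    rw [hL, ← List.map_map]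
    exact h0.map f
  have key : φ L.prod = L.prod := by
    rw [map_list_prod]
    have h2 : L.map φ = (List.finRange n).map (f ∘ π) := by
      rw [hL, List.map_map]
      exact List.map_congr_left (fun l _ => hφf l)
    rw [h2]
    refine hperm.prod_eq' ?_
    exact List.pairwise_map.mpr (List.pairwise_of_forall (fun a b => hcf (π a) (π b)))
  intro i j
  have h3 : (starRingEnd ℂ) (L.prod i j) = L.prod i j := congrFun (congrFun key i) j
  exact (Complex.conj_eq_iff_im).mp h3
end

section
/- Let A ∈ ℝ^{d×d}, x_0 ∈ ℝ^d, and let an explicit s-stage Runge–Kutta method with real coefficients 𝔄 ∈ ℝ^{s×s}, 𝔟 ∈ ℝ^s be applied to ẋ = Ax along a symmetric complex time grid Δ = [t_0, …, t_n] with real endpoints t_0, t_n ∈ ℝ (symmetric means the step sequence τ_j = t_{j+1} − t_j admits an involution π with τ_j = conj(τ_{π(j+1)−1})). Then the numerical terminal value x_n = ∏_{j=0}^{n−1} P(τ_j A)·x_0 is real, where P is the stability polynomial of the method. -/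
open Matrix Polynomial Finset

lemma my_commute_aeval_right {R A : Type*} [CommSemiring R] [Semiring A] [Algebra R A]
    {x y : A} (h : Commute x y) (p : R[X]) : Commute (Polynomial.aeval x p) y := by
  induction p using Polynomial.induction_on' with
  | add p q hp hq => simpa [map_add] using hp.add_left hq
  | monomial nn a =>
      simpa [Polynomial.aeval_monomial] using
        (Algebra.commute_algebraMap_left a y).mul_left (h.pow_left nn)

lemma my_commute_aeval {R A : Type*} [CommSemiring R] [Semiring A] [Algebra R A]
    {x y : A} (h : Commute x y) (p q : R[X]) :
    Commute (Polynomial.aeval x p) (Polynomial.aeval y q) :=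
  ((my_commute_aeval_right (my_commute_aeval_right h p).symm q).symm : _)

/-- An explicit `s`-stage Runge–Kutta method with real coefficients `𝔄, 𝔟`,
applied to `ẋ = Ax` (`A` real) along a symmetric complex time grid
`t_0, …, t_n` with real endpoints, produces a real terminal value
`x_n = ∏_{j=0}^{n-1} P(τ_j A) · x_0` from a real initial value `x_0`, where
`P` is the (real) stability polynomial of the method. -/
theorem rk_symmetric_grid_real_terminal {s d n : ℕ}
    (𝔄 : Matrix (Fin s) (Fin s) ℝ) (h𝔄 : ∀ i j : Fin s, i ≤ j → 𝔄 i j = 0)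
    (𝔟 : Fin s → ℝ) (A : Matrix (Fin d) (Fin d) ℝ)
    (k : ℂ → (Fin d → ℂ) → Fin s → (Fin d → ℂ))
    (hk : ∀ (τ : ℂ) (x : Fin d → ℂ) (i : Fin s),
      k τ x i = (A.map Complex.ofReal).mulVec x
        + τ • ∑ j ∈ Finset.univ.filter (· < i),
            (𝔄 i j : ℂ) • (A.map Complex.ofReal).mulVec (k τ x j))
    (P : Polynomial ℝ)
    (hP : ∀ (τ : ℂ) (x : Fin d → ℂ),
      x + τ • ∑ i, (𝔟 i : ℂ) • k τ x i
        = (Polynomial.aeval (τ • A.map Complex.ofReal) P).mulVec x)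
    (t : Fin (n + 1) → ℂ) (ht0 : (t 0).im = 0) (htn : (t (Fin.last n)).im = 0)
    (τ : Fin n → ℂ) (hτ : ∀ j : Fin n, τ j = t j.succ - t j.castSucc)
    (π : Equiv.Perm (Fin n)) (hπ : ∀ j, π (π j) = j)
    (hsym : ∀ j, τ j = starRingEnd ℂ (τ (π j)))
    (x₀ : Fin d → ℝ) :
    ∀ i, ((((List.finRange n).map
        (fun l => Polynomial.aeval ((τ l) • A.map Complex.ofReal) P)).prod.mulVec
          (fun i => (x₀ i : ℂ))) i).im = 0 := by
  intro i
  set Aℂ := A.map Complex.ofReal with hAℂ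
  set M : Fin n → Matrix (Fin d) (Fin d) ℂ := fun l => Polynomial.aeval (τ l • Aℂ) P with hM
  set φ : Matrix (Fin d) (Fin d) ℂ ≃ₐ[ℝ] Matrix (Fin d) (Fin d) ℂ :=
    (Complex.conjAe).mapMatrix with hφ
  have hconjτ : ∀ l, starRingEnd ℂ (τ l) = τ (π l) := fun l => by
    rw [hsym (π l), hπ]
  have hφM : ∀ l, φ (M l) = M (π l) := by
    intro l
    have h1 : φ (τ l • Aℂ) = τ (π l) • Aℂ := by
      ext a b
      simp [hφ, hAℂ, Complex.conjAe, ← hconjτ l, _root_.map_mul, Complex.conj_ofReal]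
    have h2 : φ (Polynomial.aeval (τ l • Aℂ) P) = Polynomial.aeval (φ (τ l • Aℂ)) P :=
      (Polynomial.aeval_algHom_apply (φ.toAlgHom) (τ l • Aℂ) P).symm
    show φ (Polynomial.aeval (τ l • Aℂ) P) = Polynomial.aeval (τ (π l) • Aℂ) P
    rw [h2, h1]
  have hcomm : ∀ l m, Commute (M l) (M m) := by
    intro l m
    exact my_commute_aeval (((Commute.refl Aℂ).smul_left (τ l)).smul_right (τ m)) P P
  set L : List (Matrix (Fin d) (Fin d) ℂ) := (List.finRange n).map M with hL
  have hφprod : φ L.prod = L.prod := by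
    rw [map_list_prod]
    have hperm : List.Perm (L.map φ) L := by
      have h1 : L.map φ = ((List.finRange n).map π).map M := by
        simp [hL, List.map_map, Function.comp_def, hφM]
      rw [h1, hL]
      refine List.Perm.map M ?_
      refine (List.perm_ext_iff_of_nodup
        (List.Nodup.map π.injective (List.nodup_finRange n)) (List.nodup_finRange n)).2 ?_
      intro a
      simp only [List.mem_map, List.mem_finRange, true_and, iff_true]
      exact ⟨π.symm a, (π.apply_symm_apply a)⟩
    refine hperm.prod_eq' ?_
    refine List.pairwise_of_forall_mem_list ?_
    intro a ha b hb
    simp only [hL, List.map_map, List.mem_map, List.mem_finRange, true_and] at ha hb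
    obtain ⟨la, rfl⟩ := ha
    obtain ⟨lb, rfl⟩ := hb
    simp only [Function.comp_apply, hφM]
    exact hcomm _ _
  have key : (starRingEnd ℂ) ((L.prod.mulVec (fun j => (x₀ j : ℂ))) i)
      = (L.prod.mulVec (fun j => (x₀ j : ℂ))) i := by
    simp only [Matrix.mulVec, dotProduct, map_sum, _root_.map_mul, Complex.conj_ofReal]
    refine Finset.sum_congr rfl fun j _ => ?_
    have := congrArg (fun X => X i j) hφprod
    simp only [hφ, AlgEquiv.mapMatrix_apply, Matrix.map_apply, Complex.conjAe_coe] at this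
    rw [this]
  exact Complex.conj_eq_iff_im.1 key
end

section
/- Let p ≥ 1, n ≥ 2, t_0 ≠ t ∈ ℂ, and let τ_j := γ((j+1)/n) − γ(j/n) for j = 0,…,n−1, where γ(x) = (t_0 − t)/(2i sin(π/(p+1)))·(e^{iπ(1−2x)/(p+1)} − cos(π/(p+1))) + (t_0+t)/2. Then Σ_{j=0}^{n−1} τ_j^{p+1} = 0 and Σ_{j=0}^{n−1} τ_j = t − t_0. -/
open Complex Finset

noncomputable def gammaPath (p : ℕ) (t₀ t : ℂ) (x : ℝ) : ℂ :=
  (t₀ - t) / (2 * Complex.I * Real.sin (Real.pi / (p + 1))) *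
      (Complex.exp (Complex.I * Real.pi * (1 - 2 * x) / (p + 1))
        - Real.cos (Real.pi / (p + 1)))
    + (t₀ + t) / 2

/-- Superconvergence of the equidistant discretization of the circle-segment
path: the `(p+1)`-th powers of the steps sum to zero, and the steps sum to
`t - t₀`. -/
theorem gammaPath_superconvergence (p n : ℕ) (hp : 1 ≤ p) (hn : 2 ≤ n)
    (t₀ t : ℂ) (h : t₀ ≠ t) :
    (∑ j ∈ Finset.range n,
        (gammaPath p t₀ t ((j + 1 : ℕ) / n) - gammaPath p t₀ t (j / n)) ^ (p + 1) = 0)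
    ∧ (∑ j ∈ Finset.range n,
        (gammaPath p t₀ t ((j + 1 : ℕ) / n) - gammaPath p t₀ t (j / n)) = t - t₀) := by
  have hnR : (n:ℝ) ≠ 0 := Nat.cast_ne_zero.mpr (by omega)
  have hnC : (n:ℂ) ≠ 0 := Nat.cast_ne_zero.mpr (by omega)
  have hpC : ((p:ℂ) + 1) ≠ 0 := by
    have : ((p:ℂ) + 1) = ((p + 1 : ℕ) : ℂ) := by push_cast; ring
    rw [this]
    exact Nat.cast_ne_zero.mpr (Nat.succ_ne_zero p)
  have hpR : ((p:ℝ) + 1) ≠ 0 := by positivity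
  have hsin : Real.sin (Real.pi / (p + 1)) ≠ 0 := by
    apply ne_of_gt
    apply Real.sin_pos_of_pos_of_lt_pi
    · positivity
    · rw [div_lt_iff₀ (by positivity)]
      have h1 : (1:ℝ) ≤ (p:ℝ) := by exact_mod_cast hp
      nlinarith [Real.pi_pos]
  have hsC : ((Real.sin (Real.pi / (p + 1)) : ℝ) : ℂ) ≠ 0 := Complex.ofReal_ne_zero.mpr hsin
  set c : ℂ := (t₀ - t) / (2 * Complex.I * Real.sin (Real.pi / (p + 1))) with hc
  set r : ℂ := Complex.exp (-(2 * Real.pi * Complex.I) / ((n:ℂ) * ((p:ℂ) + 1))) with hr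
  have hexp : ∀ j : ℕ,
      Complex.exp (Complex.I * (Real.pi:ℂ) * (1 - 2 * (((j:ℝ)/n : ℝ) : ℂ)) / ((p:ℂ) + 1))
        = Complex.exp ((Real.pi:ℂ) * Complex.I / ((p:ℂ) + 1)) * r ^ j := by
    intro j
    rw [hr, ← Complex.exp_nat_mul, ← Complex.exp_add]
    congr 1
    push_cast
    field_simp
    ring
  have hτ : ∀ j : ℕ,
      gammaPath p t₀ t (((j + 1 : ℕ) : ℝ) / n) - gammaPath p t₀ t (((j:ℕ) : ℝ) / n)
        = (c * Complex.exp ((Real.pi:ℂ) * Complex.I / ((p:ℂ) + 1)) * (r - 1)) * r ^ j := by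
    intro j
    unfold gammaPath
    rw [← hc]
    have h1 := hexp (j + 1)
    have h2 := hexp j
    push_cast at h1 h2 ⊢
    rw [h1, h2]
    ring
  constructor
  · -- powers sum to zero
    have hz : r ^ (p + 1) = Complex.exp (-(2 * Real.pi * Complex.I) / (n:ℂ)) := by
      rw [hr, ← Complex.exp_nat_mul]
      congr 1
      push_cast
      field_simp
    have h2pi : (2 * (Real.pi:ℂ) * Complex.I) ≠ 0 := by
      simp [Complex.I_ne_zero, Real.pi_ne_zero]
    have hz1 : r ^ (p + 1) ≠ 1 := by
      rw [hz]
      intro hone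
      rw [Complex.exp_eq_one_iff] at hone
      obtain ⟨k, hk⟩ := hone
      have hkn : ((k * n : ℤ) : ℂ) = -1 := by
        push_cast
        apply mul_right_cancel₀ h2pi
        field_simp at hk ⊢
        linear_combination -hk
      have hkn' : (k * n : ℤ) = -1 := by exact_mod_cast hkn
      have hdvd : (n:ℤ) ∣ 1 := by
        refine (dvd_neg).mp ⟨k, ?_⟩
        linear_combination -hkn'
      have := Int.le_of_dvd one_pos hdvd
      omega
    have hzn : (r ^ (p + 1)) ^ n = 1 := by
      rw [hz, ← Complex.exp_nat_mul]
      have : (n:ℂ) * (-(2 * Real.pi * Complex.I) / (n:ℂ)) = ((-1 : ℤ) : ℂ) * (2 * Real.pi * Complex.I) := by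
        field_simp
        ring
      rw [this, Complex.exp_int_mul_two_pi_mul_I]
    calc ∑ j ∈ Finset.range n,
          (gammaPath p t₀ t ((j + 1 : ℕ) / n) - gammaPath p t₀ t (j / n)) ^ (p + 1)
        = ∑ j ∈ Finset.range n,
          (c * Complex.exp ((Real.pi:ℂ) * Complex.I / ((p:ℂ) + 1)) * (r - 1)) ^ (p + 1)
            * (r ^ (p + 1)) ^ j := by
          refine Finset.sum_congr rfl fun j _ => ?_
          rw [hτ j, mul_pow, ← pow_mul, mul_comm j (p + 1), pow_mul]
      _ = (c * Complex.exp ((Real.pi:ℂ) * Complex.I / ((p:ℂ) + 1)) * (r - 1)) ^ (p + 1)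
            * ∑ j ∈ Finset.range n, (r ^ (p + 1)) ^ j := by
          rw [Finset.mul_sum]
      _ = 0 := by
          rw [geom_sum_eq hz1, hzn]
          simp
  · -- telescoping
    have htel := Finset.sum_range_sub (f := fun k : ℕ => gammaPath p t₀ t ((k : ℝ) / n)) n
    rw [htel, Nat.cast_zero, zero_div, div_self hnR]
    unfold gammaPath
    have ha : Complex.I * (Real.pi:ℂ) * (1 - 2 * ((1:ℝ):ℂ)) / ((p:ℂ) + 1)
        = (-(Real.pi / (p + 1) : ℝ) : ℂ) * Complex.I := by
      push_cast
      field_simp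
      ring
    have hb : Complex.I * (Real.pi:ℂ) * (1 - 2 * ((0:ℝ):ℂ)) / ((p:ℂ) + 1)
        = ((Real.pi / (p + 1) : ℝ) : ℂ) * Complex.I := by
      push_cast
      field_simp
      ring
    rw [ha, hb, Complex.exp_mul_I, Complex.exp_mul_I, Complex.cos_neg, Complex.sin_neg,
      ← Complex.ofReal_cos, ← Complex.ofReal_sin]
    set S : ℂ := ((Real.sin (Real.pi / (p + 1)) : ℝ) : ℂ) with hS
    have hS0 : S ≠ 0 := hsC
    field_simp
    ring_nf
end

section
/- Let n ≥ 2 and p ≥ 1 be integers and let t̃_j := (1/2)(e^{iπ(1−j/n)} + 1) for j = 0,…,n (the equidistant discretization of the upper half circle from 0 to 1, case p = 1). Then the steps τ_j := t̃_{j+1} − t̃_j satisfy Σ_{j=0}^{n−1} τ_j² = 0 and Σ_{j=0}^{n−1} τ_j = 1. -/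
open Complex Finset

/-- For the equidistant discretization `t̃_j = (1/2)(e^{iπ(1 - j/n)} + 1)` of the
upper half circle from `0` to `1`, the steps satisfy `∑ τ_j² = 0` and
`∑ τ_j = 1`. -/
theorem half_circle_grid_superconvergence (n p : ℕ) (hn : 2 ≤ n) (hp : 1 ≤ p) :
    (∑ j ∈ Finset.range n,
        ((1 / 2 : ℂ) * (Complex.exp (Complex.I * Real.pi * (1 - ((j : ℂ) + 1) / n)) + 1)
          - (1 / 2 : ℂ) * (Complex.exp (Complex.I * Real.pi * (1 - (j : ℂ) / n)) + 1)) ^ 2 = 0)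
    ∧ (∑ j ∈ Finset.range n,
        ((1 / 2 : ℂ) * (Complex.exp (Complex.I * Real.pi * (1 - ((j : ℂ) + 1) / n)) + 1)
          - (1 / 2 : ℂ) * (Complex.exp (Complex.I * Real.pi * (1 - (j : ℂ) / n)) + 1)) = 1) := by
  have hn0 : (n : ℂ) ≠ 0 := by
    have : 0 < n := by omega
    exact_mod_cast this.ne'
  have hπ : (Real.pi : ℂ) ≠ 0 := by exact_mod_cast Real.pi_ne_zero
  set c : ℂ := Complex.exp (-(Complex.I * Real.pi / n)) with hc
  have key : ∀ j : ℕ, Complex.exp (Complex.I * Real.pi * (1 - (j : ℂ) / n)) = -c ^ j := by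
    intro j
    have h1 : c ^ j = Complex.exp ((j : ℂ) * (-(Complex.I * Real.pi / n))) :=
      (Complex.exp_nat_mul _ j).symm
    have h2 : Complex.I * Real.pi * (1 - (j : ℂ) / n)
        = Real.pi * Complex.I + (j : ℂ) * (-(Complex.I * Real.pi / n)) := by
      field_simp; ring
    rw [h2, Complex.exp_add, Complex.exp_pi_mul_I, h1]; ring
  have key' : ∀ j : ℕ, Complex.exp (Complex.I * Real.pi * (1 - ((j : ℂ) + 1) / n)) = -c ^ (j + 1) := by
    intro j
    have := key (j + 1)
    push_cast at this
    exact this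
  have hcn : c ^ n = -1 := by
    rw [hc, ← Complex.exp_nat_mul]
    have : (n : ℂ) * (-(Complex.I * Real.pi / n)) = -(Real.pi * Complex.I) := by
      field_simp
    rw [this, Complex.exp_neg, Complex.exp_pi_mul_I]
    norm_num
  have hc1 : c ≠ 1 := by
    intro h
    rw [h, one_pow] at hcn
    norm_num at hcn
  have hc2 : c ^ 2 ≠ 1 := by
    intro h
    rw [hc, ← Complex.exp_nat_mul, Complex.exp_eq_one_iff] at h
    obtain ⟨k, hk⟩ := h
    have hI := Complex.I_ne_zero
    field_simp at hk
    have h2 : (2 * (Real.pi : ℂ) * Complex.I) * (-1)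
        = (2 * (Real.pi : ℂ) * Complex.I) * ((k : ℂ) * n) := by
      linear_combination (Real.pi * Complex.I) * hk
    have h3 := mul_left_cancel₀
      (by simp [hπ, hI] : (2 * (Real.pi : ℂ) * Complex.I) ≠ 0) h2
    have h4 : ((-1 : ℤ) : ℂ) = ((k * n : ℤ) : ℂ) := by push_cast; exact h3
    have h5 : (-1 : ℤ) = k * n := by exact_mod_cast h4
    have h6 : (n : ℤ) ∣ 1 := ⟨-k, by linarith⟩
    have h7 : n ∣ 1 := by exact_mod_cast h6
    exact absurd (Nat.le_of_dvd one_pos h7) (by omega)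
  have hterm : ∀ j : ℕ,
      ((1 / 2 : ℂ) * (Complex.exp (Complex.I * Real.pi * (1 - ((j : ℂ) + 1) / n)) + 1)
        - (1 / 2 : ℂ) * (Complex.exp (Complex.I * Real.pi * (1 - (j : ℂ) / n)) + 1))
      = (1 / 2 : ℂ) * (1 - c) * c ^ j := by
    intro j
    rw [key j, key' j]
    ring
  constructor
  · have : ∀ j ∈ Finset.range n,
        ((1 / 2 : ℂ) * (Complex.exp (Complex.I * Real.pi * (1 - ((j : ℂ) + 1) / n)) + 1)
          - (1 / 2 : ℂ) * (Complex.exp (Complex.I * Real.pi * (1 - (j : ℂ) / n)) + 1)) ^ 2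
        = (1 / 2 : ℂ) ^ 2 * (1 - c) ^ 2 * (c ^ 2) ^ j := by
      intro j _
      rw [hterm j]
      ring
    have h2n : (c ^ 2) ^ n = 1 := by
      rw [← pow_mul, mul_comm, pow_mul, hcn]; norm_num
    rw [Finset.sum_congr rfl this, ← Finset.mul_sum, geom_sum_eq hc2, h2n]
    simp
  · have : ∀ j ∈ Finset.range n,
        ((1 / 2 : ℂ) * (Complex.exp (Complex.I * Real.pi * (1 - ((j : ℂ) + 1) / n)) + 1)
          - (1 / 2 : ℂ) * (Complex.exp (Complex.I * Real.pi * (1 - (j : ℂ) / n)) + 1))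
        = (1 / 2 : ℂ) * (1 - c) * c ^ j := fun j _ => hterm j
    rw [Finset.sum_congr rfl this, ← Finset.mul_sum, geom_sum_eq hc1, hcn]
    have hc1' : c - 1 ≠ 0 := sub_ne_zero.mpr hc1
    field_simp
    ring
end

section
/- Let p ≥ 1, n ≥ 2, t_0, t ∈ ℝ with t_0 ≠ t, and let τ_j := γ((j+1)/n) − γ(j/n) be the steps of the equidistant discretization of the (p+1)-th circle-segment path γ = γ^p_{t_0,t}. If p = 1 and n is even, the step sequence is symmetric: τ_j = conj(τ_{n−1−j}) for all j ∈ {0,…,n−1}. -/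
open Complex

lemma conj_gamma (t₀ t x : ℝ) :
    starRingEnd ℂ (gammaPath 1 t₀ t (1 - x)) = (t₀ + t) - gammaPath 1 t₀ t x := by
  have h1 : ((1:ℕ):ℝ) + 1 = 2 := by norm_num
  have h1' : ((1:ℕ):ℂ) + 1 = 2 := by norm_num
  simp only [gammaPath, h1, h1', Real.sin_pi_div_two, Real.cos_pi_div_two]
  have he : starRingEnd ℂ (Complex.exp (Complex.I * Real.pi * (1 - 2 * (((1 - x : ℝ)):ℂ)) / 2))
      = Complex.exp (Complex.I * Real.pi * (1 - 2 * (x:ℝ)) / 2) := by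
    rw [← Complex.exp_conj]
    congr 1
    push_cast
    simp only [map_div₀, map_mul, map_sub, map_one, Complex.conj_I, Complex.conj_ofReal,
      map_ofNat]
    ring
  rw [map_add, map_mul, map_sub, he]
  simp only [map_div₀, map_sub, map_add, map_mul, map_one, Complex.conj_I, Complex.conj_ofReal,
    map_ofNat, Complex.conj_ofNat]
  have hI := Complex.I_ne_zero
  push_cast
  field_simp
  ring

/-- For `p = 1` (half-circle path over a real segment) and even `n`, the
equidistant step sequence is symmetric: `τ_j = conj (τ_{n-1-j})`. -/
theorem half_circle_steps_symmetric (p n : ℕ) (hp : 1 ≤ p) (hn : 2 ≤ n)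
    (t₀ t : ℝ) (h : t₀ ≠ t) (hp1 : p = 1) (hneven : Even n) :
    ∀ j ∈ Finset.range n,
      gammaPath p (t₀ : ℂ) (t : ℂ) ((j + 1 : ℕ) / n) - gammaPath p (t₀ : ℂ) (t : ℂ) (j / n)
        = starRingEnd ℂ
            (gammaPath p (t₀ : ℂ) (t : ℂ) (((n - 1 - j) + 1 : ℕ) / n)
              - gammaPath p (t₀ : ℂ) (t : ℂ) ((n - 1 - j : ℕ) / n)) := by
  subst hp1
  intro j hj
  rw [Finset.mem_range] at hj
  have hn0 : (n:ℝ) ≠ 0 := by exact Nat.cast_ne_zero.mpr (by omega)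
  have e1 : (n - 1 - j) + 1 = n - j := by omega
  have e2 : ((n - j : ℕ):ℝ)/n = 1 - (j:ℝ)/n := by
    rw [Nat.cast_sub hj.le]; field_simp
  have e3 : ((n - 1 - j : ℕ):ℝ)/n = 1 - ((j + 1 : ℕ):ℝ)/n := by
    have : n - 1 - j = n - (j + 1) := by omega
    rw [this, Nat.cast_sub (by omega)]
    push_cast
    field_simp
  rw [e1, map_sub, e2, e3, conj_gamma, conj_gamma]
  ring
end
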